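/- Let a₁, a₂ ∈ [0,∞), b₂₁ ∈ (−∞,0], b₁₁ = 0, b₂₂ ∈ (0,∞) and y₁, y₂ ∈ [0,∞), so that e₁(t) = y₁ + a₁·t. Then e₂(t)/t → −b₂₁·a₁/b₂₂ as t → ∞, i.e., E(Y_t^{(2)}) has linear polynomial growth. (This is a critical case of Proposition 3.1.) -/

import Mathlib

open MeasureTheory Filter Real

lemma intExp (b t : ℝ) (hb : b ≠ 0) :
    ∫ u in (0:ℝ)..t, Real.exp (-b * u) = (1 - Real.exp (-b * t)) / b := by
  have h : ∀ u : ℝ, HasDerivAt (fun u => -(Real.exp (-b * u) / b)) (Real.exp (-b * u)) u := by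
    intro u
    have h1 : HasDerivAt (fun u : ℝ => -b * u) (-b) u := (hasDerivAt_id u).const_mul (-b) |>.congr_deriv (by ring)
    have h2 : HasDerivAt (fun u => -(Real.exp (-b * u) / b)) (-(Real.exp (-b * u) * -b / b)) u := (h1.exp.div_const b).neg
    convert h2 using 1
    field_simp
  rw [intervalIntegral.integral_eq_sub_of_hasDerivAt (fun u _ => h u)
    ((by continuity : Continuous fun u => Real.exp (-b * u)).intervalIntegrable 0 t)]
  simp
  ring

lemma intExpLin (b y a t : ℝ) (hb : b ≠ 0) :
    ∫ s in (0:ℝ)..t, Real.exp (-b * (t - s)) * (y + a * s)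
      = (y + a * t) / b - a / b ^ 2 - Real.exp (-b * t) * (y / b - a / b ^ 2) := by
  have h : ∀ s : ℝ, HasDerivAt
      (fun s => Real.exp (-b * (t - s)) * ((y + a * s) / b - a / b ^ 2))
      (Real.exp (-b * (t - s)) * (y + a * s)) s := by
    intro s
    have h1 : HasDerivAt (fun s : ℝ => -b * (t - s)) b s := by
      have := ((hasDerivAt_const s t).sub (hasDerivAt_id s)).const_mul (-b)
      simpa using this
    have h2 : HasDerivAt (fun s : ℝ => (y + a * s) / b - a / b ^ 2) (a / b) s := by
      have := (((hasDerivAt_id s).const_mul a).const_add y).div_const b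
      simpa using this.sub_const (a / b ^ 2)
    have : HasDerivAt (fun s => Real.exp (-b * (t - s)) * ((y + a * s) / b - a / b ^ 2)) (Real.exp (-b * (t - s)) * b * ((y + a * s) / b - a / b ^ 2) + Real.exp (-b * (t - s)) * (a / b)) s := (h1.exp).mul h2
    convert this using 1
    field_simp
    ring
  rw [intervalIntegral.integral_eq_sub_of_hasDerivAt (fun s _ => h s)
    ((by continuity : Continuous fun s => Real.exp (-b * (t - s)) * (y + a * s)).intervalIntegrable 0 t)]
  simp

theorem doubleHeston_critical_mean_Y2
    (a1 a2 b21 b11 b22 y1 y2 : ℝ)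
    (ha1 : 0 ≤ a1) (ha2 : 0 ≤ a2) (hb21 : b21 ≤ 0)
    (hb11 : b11 = 0) (hb22 : 0 < b22)
    (hy1 : 0 ≤ y1) (hy2 : 0 ≤ y2)
    (e1 e2 : ℝ → ℝ)
    (he1 : ∀ t, 0 ≤ t → e1 t = y1 + a1 * t)
    (he2 : ∀ t, 0 ≤ t →
      e2 t = y2 * Real.exp (-b22 * t) + a2 * (∫ u in (0:ℝ)..t, Real.exp (-b22 * u))
        - b21 * ∫ s in (0:ℝ)..t, Real.exp (-b22 * (t - s)) * e1 s) :
    Tendsto (fun t => e2 t / t) atTop (nhds (-b21 * a1 / b22)) := by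
  set C := -b21 * a1 / b22 with hC
  set D := a2 / b22 - b21 * (y1 / b22 - a1 / b22 ^ 2) with hD
  set E := y2 - a2 / b22 + b21 * (y1 / b22 - a1 / b22 ^ 2) with hE
  have hb : b22 ≠ 0 := ne_of_gt hb22
  have heq : (fun t => e2 t / t) =ᶠ[atTop] fun t => C + D * t⁻¹ + E * (Real.exp (-b22 * t) * t⁻¹) := by
    filter_upwards [eventually_gt_atTop 0] with t ht
    have h0 : (0:ℝ) ≤ t := le_of_lt ht
    have hint : (∫ s in (0:ℝ)..t, Real.exp (-b22 * (t - s)) * e1 s)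
        = ∫ s in (0:ℝ)..t, Real.exp (-b22 * (t - s)) * (y1 + a1 * s) := by
      apply intervalIntegral.integral_congr
      intro s hs
      rw [Set.uIcc_of_le h0] at hs
      simp only [he1 s hs.1]
    rw [he2 t h0, hint, intExp b22 t hb, intExpLin b22 y1 a1 t hb, hC, hD, hE]
    field_simp
    ring
  have h1 : Tendsto (fun t : ℝ => t⁻¹) atTop (nhds 0) := tendsto_inv_atTop_zero
  have h2 : Tendsto (fun t : ℝ => Real.exp (-b22 * t)) atTop (nhds 0) := by
    apply Real.tendsto_exp_atBot.comp
    exact tendsto_id.const_mul_atTop_of_neg (neg_neg_of_pos hb22)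
  have hlim : Tendsto (fun t : ℝ => C + D * t⁻¹ + E * (Real.exp (-b22 * t) * t⁻¹)) atTop
      (nhds (C + D * 0 + E * (0 * 0))) :=
    (tendsto_const_nhds.add (tendsto_const_nhds.mul h1)).add
      (tendsto_const_nhds.mul (h2.mul h1))
  simp only [mul_zero, zero_mul, add_zero] at hlim
  exact Tendsto.congr' heq.symm hlim
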